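/- arXiv:2303.01562 — 5 statements merged into one kernel-verified Lean document; each statement's English description precedes it below -/
import Mathlib

section
/- For all t with 0 ≤ t ≤ π/2, we have exp(-t²/6 - t⁴/138) ≤ sin(t)/t ≤ exp(-t²/6), where sin(t)/t is interpreted as 1 at t = 0. -/
open Real

private lemma nonneg_of_deriv (F F' : ℝ → ℝ) (hd : ∀ x, HasDerivAt F (F' x) x)
    (h00 : F 0 = 0) (hF' : ∀ x, 0 ≤ x → 0 ≤ F' x) : ∀ t, 0 ≤ t → 0 ≤ F t := by
  intro t ht
  have hmono : MonotoneOn F (Set.Ici (0 : ℝ)) := by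
    apply monotoneOn_of_deriv_nonneg (convex_Ici 0)
    · exact fun x _ => (hd x).differentiableAt.continuousAt.continuousWithinAt
    · intro x hx
      exact (hd x).differentiableAt.differentiableWithinAt
    · intro x hx
      rw [interior_Ici] at hx
      rw [(hd x).deriv]
      exact hF' x (le_of_lt hx)
  have := hmono (Set.self_mem_Ici) (Set.mem_Ici.2 ht) ht
  linarith [h00 ▸ this]

private lemma cos_ge2 (x : ℝ) (hx : 0 ≤ x) : 1 - x ^ 2 / 2 ≤ Real.cos x := by
  have := nonneg_of_deriv (fun x => Real.cos x - 1 + x ^ 2 / 2)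
    (fun x => -Real.sin x + x)
    (fun x => by
      have h := ((Real.hasDerivAt_cos x).sub_const 1).add ((hasDerivAt_pow 2 x).div_const 2)
      exact h.congr_deriv (by ring))
    (by norm_num)
    (fun x hx => by have := Real.sin_le hx; linarith) x hx
  linarith

private lemma sin_ge3 (x : ℝ) (hx : 0 ≤ x) : x - x ^ 3 / 6 ≤ Real.sin x := by
  have := nonneg_of_deriv (fun x => Real.sin x - x + x ^ 3 / 6)
    (fun x => Real.cos x - 1 + x ^ 2 / 2)
    (fun x => by
      have h := ((Real.hasDerivAt_sin x).sub (hasDerivAt_id x)).add ((hasDerivAt_pow 3 x).div_const 6)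
      exact h.congr_deriv (by ring))
    (by norm_num)
    (fun x hx => by have := cos_ge2 x hx; linarith) x hx
  linarith

private lemma cos_le4 (x : ℝ) (hx : 0 ≤ x) : Real.cos x ≤ 1 - x ^ 2 / 2 + x ^ 4 / 24 := by
  have := nonneg_of_deriv (fun x => 1 - x ^ 2 / 2 + x ^ 4 / 24 - Real.cos x)
    (fun x => -x + x ^ 3 / 6 + Real.sin x)
    (fun x => by
      have h := (((hasDerivAt_const x (1:ℝ)).sub ((hasDerivAt_pow 2 x).div_const 2)).add
        ((hasDerivAt_pow 4 x).div_const 24)).sub (Real.hasDerivAt_cos x)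
      exact h.congr_deriv (by ring))
    (by norm_num)
    (fun x hx => by have := sin_ge3 x hx; linarith) x hx
  linarith

private lemma sin_le5 (x : ℝ) (hx : 0 ≤ x) : Real.sin x ≤ x - x ^ 3 / 6 + x ^ 5 / 120 := by
  have := nonneg_of_deriv (fun x => x - x ^ 3 / 6 + x ^ 5 / 120 - Real.sin x)
    (fun x => 1 - x ^ 2 / 2 + x ^ 4 / 24 - Real.cos x)
    (fun x => by
      have h := (((hasDerivAt_id x).sub ((hasDerivAt_pow 3 x).div_const 6)).add
        ((hasDerivAt_pow 5 x).div_const 120)).sub (Real.hasDerivAt_sin x)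
      exact h.congr_deriv (by ring))
    (by norm_num)
    (fun x hx => by have := cos_le4 x hx; linarith) x hx
  linarith

private lemma cos_ge6 (x : ℝ) (hx : 0 ≤ x) :
    1 - x ^ 2 / 2 + x ^ 4 / 24 - x ^ 6 / 720 ≤ Real.cos x := by
  have := nonneg_of_deriv
    (fun x => Real.cos x - (1 - x ^ 2 / 2 + x ^ 4 / 24 - x ^ 6 / 720))
    (fun x => -Real.sin x + (x - x ^ 3 / 6 + x ^ 5 / 120))
    (fun x => by
      have h := (Real.hasDerivAt_cos x).sub
        ((((hasDerivAt_const x (1:ℝ)).sub ((hasDerivAt_pow 2 x).div_const 2)).add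
          ((hasDerivAt_pow 4 x).div_const 24)).sub ((hasDerivAt_pow 6 x).div_const 720))
      exact h.congr_deriv (by ring))
    (by norm_num)
    (fun x hx => by have := sin_le5 x hx; linarith) x hx
  linarith

private lemma sin_ge7 (x : ℝ) (hx : 0 ≤ x) :
    x - x ^ 3 / 6 + x ^ 5 / 120 - x ^ 7 / 5040 ≤ Real.sin x := by
  have := nonneg_of_deriv
    (fun x => Real.sin x - (x - x ^ 3 / 6 + x ^ 5 / 120 - x ^ 7 / 5040))
    (fun x => Real.cos x - (1 - x ^ 2 / 2 + x ^ 4 / 24 - x ^ 6 / 720))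
    (fun x => by
      have h := (Real.hasDerivAt_sin x).sub
        ((((hasDerivAt_id x).sub ((hasDerivAt_pow 3 x).div_const 6)).add
          ((hasDerivAt_pow 5 x).div_const 120)).sub ((hasDerivAt_pow 7 x).div_const 5040))
      exact h.congr_deriv (by ring))
    (by norm_num)
    (fun x hx => by have := cos_ge6 x hx; linarith) x hx
  linarith

private lemma exp_neg_hasDeriv (x : ℝ) :
    HasDerivAt (fun x : ℝ => Real.exp (-x)) (-Real.exp (-x)) x := by
  exact ((Real.hasDerivAt_exp (-x)).comp x (hasDerivAt_neg x)).congr_deriv (by simp)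

private lemma exp_neg_le2 (x : ℝ) (hx : 0 ≤ x) : Real.exp (-x) ≤ 1 - x + x ^ 2 / 2 := by
  have := nonneg_of_deriv (fun x => 1 - x + x ^ 2 / 2 - Real.exp (-x))
    (fun x => -1 + x + Real.exp (-x))
    (fun x => by
      have h := (((hasDerivAt_const x (1:ℝ)).sub (hasDerivAt_id x)).add
        ((hasDerivAt_pow 2 x).div_const 2)).sub (exp_neg_hasDeriv x)
      exact h.congr_deriv (by ring))
    (by norm_num)
    (fun x hx => by have := Real.add_one_le_exp (-x); linarith) x hx
  linarith

private lemma exp_neg_ge3 (x : ℝ) (hx : 0 ≤ x) :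
    1 - x + x ^ 2 / 2 - x ^ 3 / 6 ≤ Real.exp (-x) := by
  have := nonneg_of_deriv
    (fun x => Real.exp (-x) - (1 - x + x ^ 2 / 2 - x ^ 3 / 6))
    (fun x => -Real.exp (-x) + (1 - x + x ^ 2 / 2))
    (fun x => by
      have h := (exp_neg_hasDeriv x).sub
        ((((hasDerivAt_const x (1:ℝ)).sub (hasDerivAt_id x)).add
          ((hasDerivAt_pow 2 x).div_const 2)).sub ((hasDerivAt_pow 3 x).div_const 6))
      exact h.congr_deriv (by ring))
    (by norm_num)
    (fun x hx => by have := exp_neg_le2 x hx; linarith) x hx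
  linarith

private lemma exp_neg_le4 (x : ℝ) (hx : 0 ≤ x) :
    Real.exp (-x) ≤ 1 - x + x ^ 2 / 2 - x ^ 3 / 6 + x ^ 4 / 24 := by
  have := nonneg_of_deriv
    (fun x => 1 - x + x ^ 2 / 2 - x ^ 3 / 6 + x ^ 4 / 24 - Real.exp (-x))
    (fun x => -(1 - x + x ^ 2 / 2 - x ^ 3 / 6) + Real.exp (-x))
    (fun x => by
      have h := (((((hasDerivAt_const x (1:ℝ)).sub (hasDerivAt_id x)).add
        ((hasDerivAt_pow 2 x).div_const 2)).sub ((hasDerivAt_pow 3 x).div_const 6)).add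
        ((hasDerivAt_pow 4 x).div_const 24)).sub (exp_neg_hasDeriv x)
      exact h.congr_deriv (by ring))
    (by norm_num)
    (fun x hx => by have := exp_neg_ge3 x hx; linarith) x hx
  linarith

private lemma key_poly (u : ℝ) (hu : 0 ≤ u) (hu2 : u ≤ 2.480625) :
    1 - (u / 6 + u ^ 2 / 138) + (u / 6 + u ^ 2 / 138) ^ 2 / 2
      - (u / 6 + u ^ 2 / 138) ^ 3 / 6 + (u / 6 + u ^ 2 / 138) ^ 4 / 24
    ≤ 1 - u / 6 + u ^ 2 / 120 - u ^ 3 / 5040 := by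
  nlinarith [sq_nonneg u, sq_nonneg (u - 2.480625), mul_nonneg hu hu, pow_nonneg hu 3,
    pow_nonneg hu 4, mul_nonneg (mul_nonneg hu hu) (sub_nonneg.2 hu2),
    mul_nonneg (pow_nonneg hu 3) (sub_nonneg.2 hu2),
    mul_nonneg (pow_nonneg hu 4) (sub_nonneg.2 hu2),
    mul_nonneg (pow_nonneg hu 5) (sub_nonneg.2 hu2),
    mul_nonneg (pow_nonneg hu 6) (sub_nonneg.2 hu2)]

theorem sinc_two_sided_bound (t : ℝ) (h0 : 0 ≤ t) (h1 : t ≤ π / 2) :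
    Real.exp (-t ^ 2 / 6 - t ^ 4 / 138) ≤ (if t = 0 then 1 else Real.sin t / t) ∧
    (if t = 0 then 1 else Real.sin t / t) ≤ Real.exp (-t ^ 2 / 6) := by
  rcases eq_or_lt_of_le h0 with heq | ht
  · subst heq
    norm_num
  · rw [if_neg (ne_of_gt ht)]
    have hpi : π < 3.15 := Real.pi_lt_d2
    have ht2 : t ^ 2 ≤ 2.480625 := by nlinarith
    constructor
    · -- lower bound
      rw [le_div_iff₀ ht]
      have hx : (0:ℝ) ≤ t ^ 2 / 6 + t ^ 4 / 138 := by positivity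
      have he := exp_neg_le4 (t ^ 2 / 6 + t ^ 4 / 138) hx
      have hs := sin_ge7 t h0
      have hk := key_poly (t ^ 2) (by positivity) ht2
      have hrw : -t ^ 2 / 6 - t ^ 4 / 138 = -(t ^ 2 / 6 + t ^ 4 / 138) := by ring
      rw [hrw]
      have h2 : Real.exp (-(t ^ 2 / 6 + t ^ 4 / 138)) ≤
          1 - t ^ 2 / 6 + t ^ 4 / 120 - t ^ 6 / 5040 := by
        calc Real.exp (-(t ^ 2 / 6 + t ^ 4 / 138)) ≤ _ := he
        _ ≤ 1 - t ^ 2 / 6 + t ^ 4 / 120 - t ^ 6 / 5040 := by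
            have := hk
            nlinarith [this]
      nlinarith [h2, hs, Real.exp_pos (-(t ^ 2 / 6 + t ^ 4 / 138)), mul_pos ht ht]
    · -- upper bound
      rw [div_le_iff₀ ht]
      have hx : (0:ℝ) ≤ t ^ 2 / 6 := by positivity
      have he := exp_neg_ge3 (t ^ 2 / 6) hx
      have hs := sin_le5 t h0
      have hrw : -t ^ 2 / 6 = -(t ^ 2 / 6) := by ring
      rw [hrw]
      nlinarith [he, hs, mul_pos ht ht, sq_nonneg t, pow_nonneg h0 4, pow_nonneg h0 6]
end

section
/- For all t with 0 ≤ t ≤ π/2, sin(t)/t ≤ exp(-t²/6), with sin(t)/t interpreted as 1 at t = 0. -/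
open Real

lemma aux_mono {f f' : ℝ → ℝ} (hd : ∀ x, HasDerivAt f (f' x) x)
    (hf' : ∀ x, 0 ≤ x → 0 ≤ f' x) (hf0 : f 0 = 0) {x : ℝ} (hx : 0 ≤ x) : 0 ≤ f x := by
  rw [← hf0]
  exact monotoneOn_of_deriv_nonneg (convex_Ici 0)
    (fun y _ => ((hd y).differentiableAt.continuousAt).continuousWithinAt)
    (fun y hy => ((hd y).differentiableAt).differentiableWithinAt)
    (fun y hy => by
      rw [(hd y).deriv]
      exact hf' y (le_of_lt (by simpa using hy)))
    (by simp) (by simpa using hx) hx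

lemma sub_cube_le_sin {x : ℝ} (hx : 0 ≤ x) : x - x ^ 3 / 6 ≤ Real.sin x := by
  have := aux_mono (f := fun x => Real.sin x - (x - x ^ 3 / 6))
    (f' := fun x => Real.cos x - (1 - x ^ 2 / 2))
    (fun y => by
      have h1 : HasDerivAt (fun x : ℝ => x - x ^ 3 / 6) (1 - y ^ 2 / 2) y := by
        have := ((hasDerivAt_pow 3 y).div_const 6)
        have := (hasDerivAt_id y).sub this
        exact this.congr_deriv (by ring)
      exact (Real.hasDerivAt_sin y).sub h1)
    (fun y _ => sub_nonneg.2 (Real.one_sub_sq_div_two_le_cos))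
    (by simp) hx
  linarith [this]

lemma cos_le_quartic {x : ℝ} (hx : 0 ≤ x) : Real.cos x ≤ 1 - x ^ 2 / 2 + x ^ 4 / 24 := by
  have := aux_mono (f := fun x => (1 - x ^ 2 / 2 + x ^ 4 / 24) - Real.cos x)
    (f' := fun x => (Real.sin x - (x - x ^ 3 / 6)))
    (fun y => by
      have h1 : HasDerivAt (fun x : ℝ => 1 - x ^ 2 / 2 + x ^ 4 / 24) (-y + y ^ 3 / 6) y := by
        have h2 := ((hasDerivAt_pow 2 y).div_const 2)
        have h3 := ((hasDerivAt_pow 4 y).div_const 24)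
        have := ((hasDerivAt_const y (1:ℝ)).sub h2).add h3
        exact this.congr_deriv (by ring)
      have := h1.sub (Real.hasDerivAt_cos y)
      exact this.congr_deriv (by ring))
    (fun y hy => sub_nonneg.2 (sub_cube_le_sin hy))
    (by simp) hx
  linarith [this]

lemma sin_le_quintic {x : ℝ} (hx : 0 ≤ x) : Real.sin x ≤ x - x ^ 3 / 6 + x ^ 5 / 120 := by
  have := aux_mono (f := fun x => (x - x ^ 3 / 6 + x ^ 5 / 120) - Real.sin x)
    (f' := fun x => (1 - x ^ 2 / 2 + x ^ 4 / 24) - Real.cos x)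
    (fun y => by
      have h1 : HasDerivAt (fun x : ℝ => x - x ^ 3 / 6 + x ^ 5 / 120)
          (1 - y ^ 2 / 2 + y ^ 4 / 24) y := by
        have h2 := ((hasDerivAt_pow 3 y).div_const 6)
        have h3 := ((hasDerivAt_pow 5 y).div_const 120)
        have := ((hasDerivAt_id y).sub h2).add h3
        exact this.congr_deriv (by ring)
      exact h1.sub (Real.hasDerivAt_sin y))
    (fun y hy => sub_nonneg.2 (cos_le_quartic hy))
    (by simp) hx
  linarith [this]

theorem sinc_upper_bound (t : ℝ) (h0 : 0 ≤ t) (h1 : t ≤ π / 2) :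
    (if t = 0 then 1 else Real.sin t / t) ≤ Real.exp (-t ^ 2 / 6) := by
  rcases eq_or_lt_of_le h0 with rfl | ht
  · simp
  rw [if_neg (ne_of_gt ht)]
  rw [div_le_iff₀ ht]
  -- exp lower bound
  have hpi : π ≤ 3.15 := by linarith [pi_lt_d2]
  have ht2 : t ≤ 1.575 := h1.trans (by linarith)
  have hx1 : |(-t ^ 2 / 6 : ℝ)| ≤ 1 := by
    rw [abs_div, abs_neg, abs_of_nonneg (sq_nonneg t), abs_of_nonneg (by norm_num : (0:ℝ) ≤ 6)]
    nlinarith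
  have hexp := Real.exp_bound hx1 (by norm_num : 0 < 3)
  have hexp' : 1 + (-t ^ 2 / 6) + (-t ^ 2 / 6) ^ 2 / 2 - |(-t ^ 2 / 6)| ^ 3 * (2 / 9)
      ≤ Real.exp (-t ^ 2 / 6) := by
    have hs : ∑ i ∈ Finset.range 3, (-t ^ 2 / 6) ^ i / (i.factorial : ℝ)
        = 1 + (-t ^ 2 / 6) + (-t ^ 2 / 6) ^ 2 / 2 := by
      rw [Finset.sum_range_succ, Finset.sum_range_succ, Finset.sum_range_succ,
        Finset.sum_range_zero]
      norm_num [Nat.factorial]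
    rw [hs] at hexp
    have h4 : (((3:ℕ).succ : ℝ)) / (((3:ℕ).factorial : ℝ) * (3:ℕ)) = 2 / 9 := by
      norm_num [Nat.factorial]
    rw [h4] at hexp
    have h5 := (abs_sub_le_iff.1 hexp).2
    linarith
  have habs : |(-t ^ 2 / 6 : ℝ)| = t ^ 2 / 6 := by
    rw [abs_div, abs_neg, abs_of_nonneg (sq_nonneg t)]
    norm_num
  rw [habs] at hexp'
  have hsin := sin_le_quintic h0
  have h7 : t ^ 2 ≤ 2.49 := by nlinarith
  have h8 := mul_le_mul_of_nonneg_right h7 (pow_pos ht 5).le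
  have h9 := mul_le_mul_of_nonneg_right hexp' ht.le
  nlinarith [pow_pos ht 5, h8, h9, hsin]
end

section
/- The probability density function of the Irwin-Hall distribution X_n (sum of n i.i.d. Uniform(0,1) random variables) is f(x) = (1/(2(n−1)!)) ∑_{k=0}^{n} (−1)^k C(n,k) (x−k)^{n−1} sgn(x−k), for n ≥ 1. -/
open Real MeasureTheory


noncomputable def ihDen (n : ℕ) (x : ℝ) : ℝ :=
  (1 / (2 * (Nat.factorial (n - 1) : ℝ))) *
    ∑ k ∈ Finset.range (n + 1),
      (-1 : ℝ) ^ k * (n.choose k : ℝ) * (x - k) ^ (n - 1) * Real.sign (x - k)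

lemma measurable_realSign : Measurable Real.sign := by
  unfold Real.sign
  exact (measurable_const.ite (measurableSet_lt measurable_id measurable_const)
    (measurable_const.ite (measurableSet_lt measurable_const measurable_id) measurable_const))

lemma measurable_ihDen (n : ℕ) : Measurable (ihDen n) := by
  apply Measurable.const_mul
  apply Finset.measurable_sum
  intro k _
  exact ((measurable_const.mul ((measurable_id.sub_const _).pow_const _)).mul
    (measurable_realSign.comp (measurable_id.sub_const _)))

lemma pow_mul_sign (m : ℕ) (z : ℝ) : z ^ (m+1) * Real.sign z = |z| * z ^ m := by
  rcases lt_trichotomy z 0 with h | h | h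
  · rw [Real.sign_of_neg h, abs_of_neg h]; ring
  · subst h; simp
  · rw [Real.sign_of_pos h, abs_of_pos h]; ring

lemma intervalIntegrable_pow_sign (m : ℕ) (k a b : ℝ) :
    IntervalIntegrable (fun y => (y - k) ^ m * Real.sign (y - k)) volume a b := by
  have hcont : IntervalIntegrable (fun y : ℝ => |y - k| ^ m) volume a b :=
    Continuous.intervalIntegrable (by continuity) a b
  refine hcont.mono_fun ?_ ?_
  · exact ((((measurable_id.sub_const k).pow_const m).mul
      (measurable_realSign.comp (measurable_id.sub_const k))).aestronglyMeasurable)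
  · filter_upwards with y
    simp only [norm_eq_abs, abs_mul, abs_abs, abs_pow]
    rcases Real.sign_apply_eq (y - k) with h | h | h <;> rw [h] <;> simp

lemma key_integral (m : ℕ) (k a b : ℝ) :
    ∫ y in a..b, (y - k) ^ m * Real.sign (y - k) =
      ((b - k) ^ (m+1) * Real.sign (b - k) - (a - k) ^ (m+1) * Real.sign (a - k)) / (m+1) := by
  set F : ℝ → ℝ := fun y => (y - k) ^ (m+1) * Real.sign (y - k) with hF
  have hFabs : ∀ y, F y = |y - k| * (y - k) ^ m := fun y => pow_mul_sign m (y - k)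
  have hFcont : Continuous F := by
    have : Continuous fun y : ℝ => |y - k| * (y - k) ^ m := by continuity
    exact (funext hFabs ▸ this)
  have hderiv : ∀ y, y ≠ k → HasDerivAt F ((m+1) * ((y - k) ^ m * Real.sign (y - k))) y := by
    intro y hy
    rcases lt_or_gt_of_ne hy with h | h
    · -- y < k : near y, F z = -(z-k)^(m+1)
      have h1 : HasDerivAt (fun z : ℝ => -(z - k) ^ (m+1))
          (-((m+1) * (y - k) ^ m)) y := by
        have := ((hasDerivAt_id y).sub_const k).pow (m+1)
        simpa [Pi.pow_def, Pi.neg_def] using this.neg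
      have heq : F =ᶠ[nhds y] fun z => -(z - k) ^ (m+1) := by
        filter_upwards [eventually_lt_nhds h] with z hz
        simp [hF, Real.sign_of_neg (sub_neg.2 hz)]
      have h2 : HasDerivAt F (-((m+1 : ℝ) * (y - k) ^ m)) y := h1.congr_of_eventuallyEq heq
      convert h2 using 1
      rw [Real.sign_of_neg (sub_neg.2 h)]; ring
    · have h1 : HasDerivAt (fun z : ℝ => (z - k) ^ (m+1))
          ((m+1) * (y - k) ^ m) y := by
        have := ((hasDerivAt_id y).sub_const k).pow (m+1)
        simpa [Pi.pow_def] using this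
      have heq : F =ᶠ[nhds y] fun z => (z - k) ^ (m+1) := by
        filter_upwards [eventually_gt_nhds h] with z hz
        simp [hF, Real.sign_of_pos (sub_pos.2 hz)]
      have h2 : HasDerivAt F ((m+1 : ℝ) * (y - k) ^ m) y := h1.congr_of_eventuallyEq heq
      convert h2 using 1
      rw [Real.sign_of_pos (sub_pos.2 h)]; ring
  have hint : ∀ c d : ℝ, IntervalIntegrable
      (fun y => (m+1 : ℝ) * ((y - k) ^ m * Real.sign (y - k))) volume c d :=
    fun c d => (intervalIntegrable_pow_sign m k c d).const_mul _
  have part : ∀ c d : ℝ, (∀ y ∈ Set.Ioo (min c d) (max c d), y ≠ k) →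
      ∫ y in c..d, (m+1 : ℝ) * ((y - k) ^ m * Real.sign (y - k)) = F d - F c := by
    intro c d hcd
    refine intervalIntegral.integral_eq_sub_of_hasDeriv_right
      (hFcont.continuousOn) (fun y hy => ?_) (hint c d)
    exact (hderiv y (hcd y hy)).hasDerivWithinAt
  have hne1 : ∀ y ∈ Set.Ioo (min a k) (max a k), y ≠ k := by
    rintro y ⟨h1, h2⟩ hyk
    rw [hyk] at h1 h2
    simp only [min_lt_iff, lt_max_iff, lt_self_iff_false, or_false, false_or] at h1 h2
    linarith
  have hne2 : ∀ y ∈ Set.Ioo (min k b) (max k b), y ≠ k := by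
    rintro y ⟨h1, h2⟩ hyk
    rw [hyk] at h1 h2
    simp only [min_lt_iff, lt_max_iff, lt_self_iff_false, or_false, false_or] at h1 h2
    linarith
  have h1 := part a k hne1
  have h2 := part k b hne2
  have hadd := intervalIntegral.integral_add_adjacent_intervals (hint a k) (hint k b)
  rw [h1, h2] at hadd
  rw [intervalIntegral.integral_const_mul] at hadd
  have hm : (m : ℝ) + 1 ≠ 0 := by positivity
  field_simp [hF] at hadd ⊢
  linarith


lemma ih_sum_identity (n : ℕ) (T : ℕ → ℝ) :
    ∑ k ∈ Finset.range (n+2), (-1:ℝ)^k * ((n+1).choose k) * T k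
    = ∑ k ∈ Finset.range (n+1), (-1:ℝ)^k * (n.choose k) * T k
      - ∑ k ∈ Finset.range (n+1), (-1:ℝ)^k * (n.choose k) * T (k+1) := by
  rw [Finset.sum_range_succ' (fun k => (-1:ℝ)^k * (((n+1).choose k : ℕ) : ℝ) * T k) (n+1)]
  rw [Finset.sum_range_succ' (fun k => (-1:ℝ)^k * ((n.choose k : ℕ) : ℝ) * T k) n]
  have hext : ∑ k ∈ Finset.range n, (-1:ℝ)^(k+1) * ((n.choose (k+1) : ℕ) : ℝ) * T (k+1)
      = ∑ k ∈ Finset.range (n+1), (-1:ℝ)^(k+1) * ((n.choose (k+1) : ℕ) : ℝ) * T (k+1) := by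
    rw [Finset.sum_range_succ, Nat.choose_succ_self]
    simp
  simp only [Nat.choose_zero_right, pow_zero, Nat.cast_one, one_mul]
  rw [hext]
  have key : ∑ k ∈ Finset.range (n+1), (-1:ℝ)^(k+1) * (((n+1).choose (k+1) : ℕ) : ℝ) * T (k+1)
      = ∑ k ∈ Finset.range (n+1), ((-1:ℝ)^(k+1) * ((n.choose (k+1) : ℕ) : ℝ) * T (k+1)
          - (-1:ℝ)^k * ((n.choose k : ℕ) : ℝ) * T (k+1)) := by
    refine Finset.sum_congr rfl fun k _ => ?_
    rw [Nat.choose_succ_succ]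
    push_cast
    ring
  rw [key, Finset.sum_sub_distrib]
  ring




lemma integral_term (m : ℕ) (c k a b : ℝ) :
    ∫ y in a..b, c * (y - k) ^ m * Real.sign (y - k)
      = c * (((b - k) ^ (m+1) * Real.sign (b - k)
          - (a - k) ^ (m+1) * Real.sign (a - k)) / (m+1)) := by
  have h : (fun y => c * (y - k) ^ m * Real.sign (y - k))
      = fun y => c * ((y - k) ^ m * Real.sign (y - k)) := by funext y; ring
  rw [h, intervalIntegral.integral_const_mul, key_integral]

lemma intervalIntegrable_term (m : ℕ) (c k a b : ℝ) :
    IntervalIntegrable (fun y => c * (y - k) ^ m * Real.sign (y - k)) volume a b := by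
  have h : (fun y => c * (y - k) ^ m * Real.sign (y - k))
      = fun y => c * ((y - k) ^ m * Real.sign (y - k)) := by funext y; ring
  rw [h]; exact (intervalIntegrable_pow_sign m k a b).const_mul c

lemma intervalIntegrable_ihDen (n : ℕ) (a b : ℝ) :
    IntervalIntegrable (ihDen n) volume a b := by
  have h : IntervalIntegrable (fun y => ∑ k ∈ Finset.range (n+1),
      (-1:ℝ)^k * (n.choose k : ℝ) * (y - k) ^ (n-1) * Real.sign (y - k)) volume a b := by
    have := IntervalIntegrable.sum (μ := volume) (a := a) (b := b) (Finset.range (n+1))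
      (f := fun k y => (-1:ℝ)^k * (n.choose k : ℝ) * (y - k) ^ (n-1) * Real.sign (y - k))
      (fun k _ => intervalIntegrable_term (n-1) _ k a b)
    convert this using 1
    · rfl
    funext y
    rw [Finset.sum_apply]
  exact h.const_mul _

lemma ihDen_succ (n : ℕ) (hn : 1 ≤ n) (x : ℝ) :
    ∫ y in (x-1)..x, ihDen n y = ihDen (n+1) x := by
  obtain ⟨m, rfl⟩ : ∃ m, n = m + 1 := ⟨n - 1, (Nat.succ_pred_eq_of_pos hn).symm⟩
  set T : ℕ → ℝ := fun k => (x - k) ^ (m+1) * Real.sign (x - k) with hT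
  unfold ihDen
  simp only [Nat.add_sub_cancel]
  rw [intervalIntegral.integral_const_mul]
  rw [intervalIntegral.integral_finset_sum (μ := volume) (a := x-1) (b := x)
    (s := Finset.range (m+2))
    (f := fun k y => (-1:ℝ)^k * (((m+1).choose k : ℕ) : ℝ) * (y - k) ^ m * Real.sign (y - k))
    (fun k _ => intervalIntegrable_term m _ k (x-1) x)]
  have hterm : ∀ k ∈ Finset.range (m+2),
      ∫ y in (x-1)..x, (-1:ℝ)^k * (((m+1).choose k : ℕ) : ℝ) * (y - k) ^ m * Real.sign (y - k)
        = (-1:ℝ)^k * (((m+1).choose k : ℕ) : ℝ) * ((T k - T (k+1)) / (m+1)) := by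
    intro k _
    rw [integral_term]
    have h1 : x - 1 - (k:ℝ) = x - ((k+1 : ℕ) : ℝ) := by push_cast; ring
    rw [h1, hT]
  rw [Finset.sum_congr rfl hterm]
  have hfac : ((m+1+1 : ℕ).factorial : ℝ) = ((m+1 : ℕ) + 1) * ((m+1 : ℕ).factorial) := by
    rw [Nat.factorial_succ]; push_cast; ring
  set S1 := ∑ k ∈ Finset.range (m+2), (-1:ℝ)^k * (((m+1).choose k : ℕ) : ℝ) * T k with hS1
  set S2 := ∑ k ∈ Finset.range (m+2), (-1:ℝ)^k * (((m+1).choose k : ℕ) : ℝ) * T (k+1) with hS2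
  have hRHSsum : ∑ k ∈ Finset.range (m+1+1+1),
      (-1:ℝ)^k * (((m+1+1).choose k : ℕ) : ℝ) * (x - k)^(m+1) * Real.sign (x - k)
        = S1 - S2 := by
    rw [hS1, hS2, ← ih_sum_identity (m+1) T]
    refine Finset.sum_congr rfl fun k _ => ?_
    simp only [hT]
    ring
  rw [hRHSsum]
  have hL : ∑ k ∈ Finset.range (m+2),
      (-1:ℝ)^k * (((m+1).choose k : ℕ) : ℝ) * ((T k - T (k+1)) / ((m:ℝ)+1))
        = (S1 - S2) / ((m:ℝ)+1) := by
    rw [hS1, hS2, ← Finset.sum_sub_distrib, Finset.sum_div]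
    refine Finset.sum_congr rfl fun k _ => ?_
    ring
  rw [hL]
  have h1 : ((m : ℕ).factorial : ℝ) ≠ 0 := by positivity
  rw [Nat.factorial_succ]
  push_cast
  field_simp



/-- Law of the Irwin-Hall variable `X_n`, the sum of `n` i.i.d. Uniform(0,1) variables. -/
noncomputable def irwinHallLaw (n : ℕ) : Measure ℝ :=
  Measure.map (fun u : Fin n → ℝ => ∑ i, u i)
    (Measure.pi fun _ : Fin n => volume.restrict (Set.Icc (0 : ℝ) 1))

local notation "uni" => volume.restrict (Set.Icc (0 : ℝ) 1)

instance : IsProbabilityMeasure (volume.restrict (Set.Icc (0 : ℝ) 1)) := by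
  constructor
  rw [Measure.restrict_apply_univ, Real.volume_Icc]
  norm_num

lemma ihDen_one (x : ℝ) : ihDen 1 x = (Real.sign x - Real.sign (x - 1)) / 2 := by
  unfold ihDen
  rw [Finset.sum_range_succ, Finset.sum_range_one]
  norm_num
  ring

lemma ihDen_one_nonneg (x : ℝ) : 0 ≤ ihDen 1 x := by
  rw [ihDen_one]
  have h : Real.sign (x - 1) ≤ Real.sign x := by
    rcases lt_trichotomy x 0 with h | h | h
    · rw [Real.sign_of_neg h, Real.sign_of_neg (by linarith)]
    · rw [h]; rw [Real.sign_zero, Real.sign_of_neg (by norm_num : (0:ℝ) - 1 < 0)]; norm_num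
    · rw [Real.sign_of_pos h]
      rcases Real.sign_apply_eq (x - 1) with h' | h' | h' <;> rw [h'] <;> norm_num
  linarith

lemma irwinHallLaw_one : irwinHallLaw 1 = uni := by
  unfold irwinHallLaw
  have h : (fun u : Fin 1 → ℝ => ∑ i, u i) = (MeasurableEquiv.funUnique (Fin 1) ℝ) := by
    funext u
    simp [Fin.sum_univ_one, MeasurableEquiv.funUnique]
  rw [h]
  exact (measurePreserving_funUnique uni (Fin 1)).map_eq

lemma base_case : irwinHallLaw 1 = volume.withDensity fun x => ENNReal.ofReal (ihDen 1 x) := by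
  rw [irwinHallLaw_one, ← withDensity_indicator_one measurableSet_Icc]
  apply withDensity_congr_ae
  have hnull : volume ({0, 1} : Set ℝ) = 0 :=
    Set.Finite.measure_zero (Set.toFinite _) volume
  filter_upwards [measure_eq_zero_iff_ae_notMem.mp hnull] with x hx
  simp only [Set.mem_insert_iff, Set.mem_singleton_iff, not_or] at hx
  obtain ⟨hx0, hx1⟩ := hx
  rw [ihDen_one]
  rcases lt_trichotomy x 0 with h | h | h
  · rw [Set.indicator_of_notMem (by simp [Set.mem_Icc]; intro h'; linarith)]
    rw [Real.sign_of_neg h, Real.sign_of_neg (by linarith)]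
    norm_num
  · exact absurd h hx0
  · rcases lt_trichotomy x 1 with h1 | h1 | h1
    · rw [Set.indicator_of_mem (by simp [Set.mem_Icc]; constructor <;> linarith)]
      rw [Real.sign_of_pos h, Real.sign_of_neg (by linarith)]
      norm_num
    · exact absurd h1 hx1
    · rw [Set.indicator_of_notMem (by simp [Set.mem_Icc]; intro h'; linarith)]
      rw [Real.sign_of_pos h, Real.sign_of_pos (by linarith)]
      norm_num

lemma irwinHallLaw_succ (n : ℕ) :
    irwinHallLaw (n+1)
      = Measure.map (fun p : ℝ × ℝ => p.1 + p.2) ((uni).prod (irwinHallLaw n)) := by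
  unfold irwinHallLaw
  have mp := measurePreserving_piFinSuccAbove (fun _ : Fin (n+1) => uni) 0
  have h1 : (fun u : Fin (n+1) → ℝ => ∑ i, u i)
      = (fun p : ℝ × (Fin n → ℝ) => p.1 + ∑ j, p.2 j)
        ∘ (MeasurableEquiv.piFinSuccAbove (fun _ : Fin (n+1) => ℝ) 0) := by
    funext u
    simp [MeasurableEquiv.piFinSuccAbove, Fin.sum_univ_succAbove u 0, Fin.tail]
  rw [h1, ← Measure.map_map (by measurability) (MeasurableEquiv.measurable _), mp.map_eq]
  have h2 : (fun p : ℝ × (Fin n → ℝ) => p.1 + ∑ j, p.2 j)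
      = (fun p : ℝ × ℝ => p.1 + p.2) ∘ (Prod.map id (fun u : Fin n → ℝ => ∑ j, u j)) := by
    funext p; rfl
  rw [h2, ← Measure.map_map measurable_add (measurable_id.prodMap (by measurability)),
    ← Measure.map_prod_map _ _ measurable_id (by measurability), Measure.map_id]

lemma conv_density (f : ℝ → ℝ) (hf : Measurable f) :
    Measure.map (fun p : ℝ × ℝ => p.1 + p.2)
      ((uni).prod (volume.withDensity fun x => ENNReal.ofReal (f x)))
    = volume.withDensity
        (fun x => ∫⁻ t in Set.Icc (0:ℝ) 1, ENNReal.ofReal (f (x - t))) := by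
  ext s hs
  rw [Measure.map_apply measurable_add hs, Measure.prod_apply (measurable_add hs),
    withDensity_apply _ hs]
  have hsec : ∀ t : ℝ, (Prod.mk t ⁻¹' ((fun p : ℝ × ℝ => p.1 + p.2) ⁻¹' s))
      = (fun y => t + y) ⁻¹' s := by intro t; rfl
  have hmf : Measurable fun x => ENNReal.ofReal (f x) := hf.ennreal_ofReal
  have htrans : ∀ t : ℝ,
      (volume.withDensity fun x => ENNReal.ofReal (f x)) ((fun y => t + y) ⁻¹' s)
        = ∫⁻ x in s, ENNReal.ofReal (f (x - t)) := by
    intro t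
    rw [withDensity_apply _ (hs.preimage (measurable_const_add t))]
    symm
    have hmap : (volume : Measure ℝ) = Measure.map (fun y => t + y) volume :=
      (map_add_left_eq_self volume t).symm
    have hm2 : Measurable fun x : ℝ => ENNReal.ofReal (f (x - t)) :=
      (hf.comp (measurable_sub_const t)).ennreal_ofReal
    calc ∫⁻ x in s, ENNReal.ofReal (f (x - t)) ∂volume
        = ∫⁻ x in s, ENNReal.ofReal (f (x - t)) ∂(Measure.map (fun y => t + y) volume) := by
          rw [← hmap]
      _ = ∫⁻ y in (fun y => t + y) ⁻¹' s, ENNReal.ofReal (f (t + y - t)) ∂volume := by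
          rw [setLIntegral_map hs hm2 (measurable_const_add t)]
      _ = ∫⁻ y in (fun y => t + y) ⁻¹' s, ENNReal.ofReal (f y) ∂volume := by
          congr 1; funext y; rw [add_sub_cancel_left]
  simp_rw [hsec, htrans]
  rw [lintegral_lintegral_swap]
  exact ((hf.comp (measurable_snd.sub measurable_fst)).ennreal_ofReal).aemeasurable


lemma ihDen_lintegral_eq (n : ℕ) (hn : 1 ≤ n) (hnn : ∀ x, 0 ≤ ihDen n x) (x : ℝ) :
    ∫⁻ t in Set.Icc (0:ℝ) 1, ENNReal.ofReal (ihDen n (x - t))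
      = ENNReal.ofReal (ihDen (n+1) x) := by
  have hInt : IntegrableOn (fun t => ihDen n (x - t)) (Set.Icc (0:ℝ) 1) volume := by
    have h1 := (intervalIntegrable_ihDen n (x-1) x).comp_sub_left x
    have h2 : x - (x - 1) = (1:ℝ) := by ring
    have h3 : x - x = (0:ℝ) := by ring
    rw [h2, h3] at h1
    exact (intervalIntegrable_iff_integrableOn_Icc_of_le (by norm_num : (0:ℝ) ≤ 1)).mp h1.symm
  have heqI : ∫ t in Set.Icc (0:ℝ) 1, ihDen n (x - t) = ihDen (n+1) x := by
    rw [MeasureTheory.integral_Icc_eq_integral_Ioc,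
      ← intervalIntegral.integral_of_le (by norm_num : (0:ℝ) ≤ 1),
      intervalIntegral.integral_comp_sub_left (ihDen n) x, sub_zero]
    exact ihDen_succ n hn x
  rw [← ofReal_integral_eq_lintegral_ofReal hInt
    (Filter.Eventually.of_forall fun t => hnn _), heqI]

lemma ih_induction (n : ℕ) (hn : 1 ≤ n) :
    (∀ x, 0 ≤ ihDen n x) ∧
      irwinHallLaw n = volume.withDensity fun x => ENNReal.ofReal (ihDen n x) := by
  induction n, hn using Nat.le_induction with
  | base => exact ⟨ihDen_one_nonneg, base_case⟩
  | succ n hn ih =>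
    obtain ⟨hnn, h⟩ := ih
    have hnn' : ∀ x, 0 ≤ ihDen (n+1) x := by
      intro x
      rw [← ihDen_succ n hn x]
      exact intervalIntegral.integral_nonneg (by linarith) fun y _ => hnn y
    refine ⟨hnn', ?_⟩
    rw [irwinHallLaw_succ n, h, conv_density (ihDen n) (measurable_ihDen n)]
    congr 1
    funext x
    exact ihDen_lintegral_eq n hn hnn x

theorem irwinHall_density (n : ℕ) (hn : 1 ≤ n) :
    irwinHallLaw n =
      volume.withDensity fun x : ℝ =>
        ENNReal.ofReal
          ((1 / (2 * (Nat.factorial (n - 1) : ℝ))) *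
            ∑ k ∈ Finset.range (n + 1),
              (-1 : ℝ) ^ k * (n.choose k : ℝ) * (x - k) ^ (n - 1) * Real.sign (x - k)) :=
  (ih_induction n hn).2
end

section
/- Every real orthogonal 4×4 matrix U with det(U) = 1 acting on two qubits can be implemented by a quantum circuit using at most 2 CNOT gates together with single-qubit unitary gates; equivalently, U = (A₁ ⊗ A₂)·CNOT·(B₁ ⊗ B₂ )·CNOT·(C₁ ⊗ C₂) for some single-qubit unitaries A_i, B_i, C_i. -/
open Matrix Kronecker

/-- Tensor (Kronecker) product of two single-qubit gates as a two-qubit gate. -/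
noncomputable def kron2 (A B : Matrix (Fin 2) (Fin 2) ℂ) : Matrix (Fin 4) (Fin 4) ℂ :=
  Matrix.reindex finProdFinEquiv finProdFinEquiv (A ⊗ₖ B)

/-- The CNOT gate. -/
def CNOT : Matrix (Fin 4) (Fin 4) ℂ :=
  !![1, 0, 0, 0; 0, 1, 0, 0; 0, 0, 0, 1; 0, 0, 1, 0]

namespace SO4Decomp

/-! ### Quaternion machinery over `Fin 4 → ℝ` -/

/-- quaternion multiplication -/
def qmul (a b : Fin 4 → ℝ) : Fin 4 → ℝ :=
  ![a 0*b 0 - a 1*b 1 - a 2*b 2 - a 3*b 3,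
    a 0*b 1 + a 1*b 0 + a 2*b 3 - a 3*b 2,
    a 0*b 2 - a 1*b 3 + a 2*b 0 + a 3*b 1,
    a 0*b 3 + a 1*b 2 - a 2*b 1 + a 3*b 0]

def qconj (a : Fin 4 → ℝ) : Fin 4 → ℝ := ![a 0, -a 1, -a 2, -a 3]

def nq (a : Fin 4 → ℝ) : ℝ := a 0^2 + a 1^2 + a 2^2 + a 3^2

def er0 : Fin 4 → ℝ := ![1, 0, 0, 0]
def er1 : Fin 4 → ℝ := ![0, 1, 0, 0]

/-- matrix of left multiplication by a quaternion -/
def Lm (r : Fin 4 → ℝ) : Matrix (Fin 4) (Fin 4) ℝ :=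
  !![r 0, -r 1, -r 2, -r 3;
     r 1,  r 0, -r 3,  r 2;
     r 2,  r 3,  r 0, -r 1;
     r 3, -r 2,  r 1,  r 0]

/-- matrix of right multiplication by a quaternion -/
def Rm (r : Fin 4 → ℝ) : Matrix (Fin 4) (Fin 4) ℝ :=
  !![r 0, -r 1, -r 2, -r 3;
     r 1,  r 0,  r 3, -r 2;
     r 2, -r 3,  r 0,  r 1;
     r 3,  r 2, -r 1,  r 0]

lemma qconj_qconj (a : Fin 4 → ℝ) : qconj (qconj a) = a := by
  funext i; fin_cases i <;> simp [qconj]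

lemma qmul_conj_self (a : Fin 4 → ℝ) : qmul a (qconj a) = ![nq a, 0, 0, 0] := by
  funext i; fin_cases i <;> simp [qmul, qconj, nq] <;> ring

lemma qmul_conj_self' (a : Fin 4 → ℝ) : qmul (qconj a) a = ![nq a, 0, 0, 0] := by
  funext i; fin_cases i <;> simp [qmul, qconj, nq] <;> ring

lemma Lm_mul (a b : Fin 4 → ℝ) : Lm a * Lm b = Lm (qmul a b) := by
  ext i j
  fin_cases i <;> fin_cases j <;>
    simp [Lm, qmul, Matrix.mul_apply, Fin.sum_univ_four] <;> ring

lemma Rm_mul (a b : Fin 4 → ℝ) : Rm a * Rm b = Rm (qmul b a) := by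
  ext i j
  fin_cases i <;> fin_cases j <;>
    simp [Rm, qmul, Matrix.mul_apply, Fin.sum_univ_four] <;> ring

lemma Lm_Rm_comm (a b : Fin 4 → ℝ) : Lm a * Rm b = Rm b * Lm a := by
  ext i j
  fin_cases i <;> fin_cases j <;>
    simp [Lm, Rm, Matrix.mul_apply, Fin.sum_univ_four] <;> ring

lemma Lm_one : Lm ![1, 0, 0, 0] = 1 := by
  ext i j
  fin_cases i <;> fin_cases j <;>
    simp [Lm, Matrix.one_apply, Matrix.vecHead, Matrix.vecTail]

lemma Rm_one : Rm ![1, 0, 0, 0] = 1 := by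
  ext i j
  fin_cases i <;> fin_cases j <;>
    simp [Rm, Matrix.one_apply, Matrix.vecHead, Matrix.vecTail]

lemma Lm_transpose (a : Fin 4 → ℝ) : (Lm a)ᵀ = Lm (qconj a) := by
  ext i j
  fin_cases i <;> fin_cases j <;> simp [Lm, qconj]

lemma Rm_transpose (a : Fin 4 → ℝ) : (Rm a)ᵀ = Rm (qconj a) := by
  ext i j
  fin_cases i <;> fin_cases j <;> simp [Rm, qconj]

lemma Lm_mulVec (a x : Fin 4 → ℝ) : Lm a *ᵥ x = qmul a x := by
  funext i
  fin_cases i <;>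
    simp [Lm, qmul, Matrix.mulVec, dotProduct, Fin.sum_univ_four] <;> ring

lemma Rm_mulVec (a x : Fin 4 → ℝ) : Rm a *ᵥ x = qmul x a := by
  funext i
  fin_cases i <;>
    simp [Rm, qmul, Matrix.mulVec, dotProduct, Fin.sum_univ_four] <;> ring

lemma Lm_det (a : Fin 4 → ℝ) : (Lm a).det = (nq a)^2 := by
  simp [Lm, Matrix.det_succ_row_zero, Fin.sum_univ_succ, nq]; simp [Fin.succAbove, Fin.lt_def]; ring

lemma Rm_det (a : Fin 4 → ℝ) : (Rm a).det = (nq a)^2 := by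
  simp [Rm, Matrix.det_succ_row_zero, Fin.sum_univ_succ, nq]; simp [Fin.succAbove, Fin.lt_def]; ring

lemma Lm_smul (c : ℝ) (a : Fin 4 → ℝ) : Lm (c • a) = c • Lm a := by
  ext i j
  fin_cases i <;> fin_cases j <;> simp [Lm] <;> ring

lemma Rm_smul (c : ℝ) (a : Fin 4 → ℝ) : Rm (c • a) = c • Rm a := by
  ext i j
  fin_cases i <;> fin_cases j <;> simp [Rm] <;> ring

lemma qconj_smul (c : ℝ) (a : Fin 4 → ℝ) : qconj (c • a) = c • qconj a := by
  funext i
  fin_cases i <;> simp [qconj] <;> ring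

lemma nq_smul (c : ℝ) (a : Fin 4 → ℝ) : nq (c • a) = c^2 * nq a := by
  simp [nq]; ring

lemma mulVec_er0 (X : Matrix (Fin 4) (Fin 4) ℝ) :
    X *ᵥ er0 = ![X 0 0, X 1 0, X 2 0, X 3 0] := by
  funext i
  fin_cases i <;> simp [er0, Matrix.mulVec, dotProduct, Fin.sum_univ_four]

lemma mulVec_er1 (X : Matrix (Fin 4) (Fin 4) ℝ) :
    X *ᵥ er1 = ![X 0 1, X 1 1, X 2 1, X 3 1] := by
  funext i
  fin_cases i <;> simp [er1, Matrix.mulVec, dotProduct, Fin.sum_univ_four]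

/-- rotate a unit imaginary quaternion to `i` by conjugation -/
lemma exists_rot_to_e1 (u : Fin 4 → ℝ) (hu0 : u 0 = 0) (hu : nq u = 1) :
    ∃ q : Fin 4 → ℝ, nq q = 1 ∧ qmul q (qmul u (qconj q)) = er1 := by
  rw [nq] at hu
  by_cases h1 : u 1 = -1
  · have h23 : u 2 ^ 2 + u 3 ^ 2 = 0 := by nlinarith
    have hu2 : u 2 = 0 := by nlinarith [sq_nonneg (u 2), sq_nonneg (u 3)]
    have hu3 : u 3 = 0 := by nlinarith [sq_nonneg (u 2), sq_nonneg (u 3)]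
    refine ⟨![0, 0, 1, 0], by simp [nq], ?_⟩
    funext i
    fin_cases i <;> simp [qmul, qconj, er1, hu0, h1, hu2, hu3]
  · -- main case
    have h1ge : -1 ≤ u 1 := by nlinarith [sq_nonneg (u 1 + 1), sq_nonneg (u 0), sq_nonneg (u 2), sq_nonneg (u 3)]
    have hpos : 0 < 2 + 2 * u 1 := by
      rcases lt_or_eq_of_le h1ge with h | h
      · linarith
      · exact absurd h.symm h1
    set n : ℝ := Real.sqrt (2 + 2 * u 1) with hn
    have hn2 : n ^ 2 = 2 + 2 * u 1 := Real.sq_sqrt hpos.le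
    have hnne : n ≠ 0 := by
      intro h; rw [h] at hn2; simp at hn2; linarith
    set v : Fin 4 → ℝ := ![1 + u 1, 0, u 3, -u 2] with hv
    have hnqv : nq v = 2 + 2 * u 1 := by
      simp [nq, hv]
      linear_combination hu - u 0 * hu0
    have hcore : qmul v (qmul u (qconj v)) = (2 + 2 * u 1) • er1 := by
      funext i
      fin_cases i <;>
        simp [qmul, qconj, hv, er1] <;>
      · ring_nf
        first
        | linear_combination (u 0) * hu + (2 + 2*u 1 - u 0*u 0) * hu0
        | linear_combination (2 + u 1) * hu + (-2*u 0 - u 0*u 1) * hu0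
        | linear_combination (-(u 2)) * hu + (u 0*u 2) * hu0
        | linear_combination (-(u 3)) * hu + (u 0*u 3) * hu0
    refine ⟨n⁻¹ • v, ?_, ?_⟩
    · rw [nq_smul, hnqv]
      field_simp
      linarith [hn2]
    · have hsc : ∀ (c : ℝ) (a b : Fin 4 → ℝ), qmul (c • a) b = c • qmul a b := by
        intro c a b; funext i; fin_cases i <;> simp [qmul] <;> ring
      have hsc' : ∀ (c : ℝ) (a b : Fin 4 → ℝ), qmul a (c • b) = c • qmul a b := by
        intro c a b; funext i; fin_cases i <;> simp [qmul] <;> ring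
      rw [qconj_smul, hsc, hsc', hsc', hcore, smul_smul, smul_smul]
      have hone : n⁻¹ * n⁻¹ * (2 + 2 * u 1) = 1 := by
        field_simp
        linarith [hn2]
      rw [hone, one_smul]

lemma half_angle (a b : ℝ) (h : a^2 + b^2 = 1) :
    ∃ x y : ℝ, x^2 + y^2 = 1 ∧ x^2 - y^2 = a ∧ 2*x*y = b := by
  by_cases ha : a = -1
  · have hb : b = 0 := by nlinarith
    exact ⟨0, 1, by norm_num, by rw [ha]; norm_num, by rw [hb]; ring⟩
  · have hage : -1 ≤ a := by nlinarith [sq_nonneg b, sq_nonneg (a+1)]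
    have hpos : 0 < 1 + a := by
      rcases lt_or_eq_of_le hage with h' | h'
      · linarith
      · exact absurd h'.symm ha
    set x : ℝ := Real.sqrt ((1 + a)/2) with hx
    have hx2 : x ^ 2 = (1 + a)/2 := Real.sq_sqrt (by linarith)
    have hxne : x ≠ 0 := by
      intro hh; rw [hh] at hx2; simp at hx2; linarith
    refine ⟨x, b/(2*x), ?_, ?_, ?_⟩
    · field_simp
      nlinarith [hx2, h]
    · field_simp
      nlinarith [hx2, h]
    · field_simp

/-- the quaternionic decomposition of a special orthogonal 4×4 matrix -/
lemma qmul_er0_left (x : Fin 4 → ℝ) : qmul ![1,0,0,0] x = x := by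
  funext i; fin_cases i <;> simp [qmul] <;> ring

lemma qmul_er0_right (x : Fin 4 → ℝ) : qmul x ![1,0,0,0] = x := by
  funext i; fin_cases i <;> simp [qmul] <;> ring

lemma nq_qconj (a : Fin 4 → ℝ) : nq (qconj a) = nq a := by
  simp [nq, qconj]

lemma exists_quat_decomp (U : Matrix (Fin 4) (Fin 4) ℝ)
    (hUl : Uᵀ * U = 1) (hUr : U * Uᵀ = 1) (hdet : U.det = 1) :
    ∃ p q w : Fin 4 → ℝ, nq p = 1 ∧ nq q = 1 ∧ nq w = 1 ∧
      U = Lm p * (Lm (qconj q) * (Rm q * (Lm w * Rm (qconj w)))) := by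
  obtain ⟨p, hp_def⟩ : ∃ p, p = ![U 0 0, U 1 0, U 2 0, U 3 0] := ⟨_, rfl⟩
  have hp : nq p = 1 := by
    have h00 := congrFun (congrFun hUl 0) 0
    simp [Matrix.mul_apply, Fin.sum_univ_four, Matrix.one_apply,
      Matrix.transpose_apply] at h00
    rw [hp_def]
    simp [nq]
    linear_combination h00
  have hLmp : Lm p * Lm (qconj p) = 1 := by
    rw [Lm_mul, qmul_conj_self, hp, Lm_one]
  have hLmp' : Lm (qconj p) * Lm p = 1 := by
    rw [Lm_mul, qmul_conj_self', hp, Lm_one]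
  obtain ⟨V, hV_def⟩ : ∃ V, V = Lm (qconj p) * U := ⟨_, rfl⟩
  have hVl : Vᵀ * V = 1 := by
    rw [hV_def, Matrix.transpose_mul, Lm_transpose, qconj_qconj,
      Matrix.mul_assoc, ← Matrix.mul_assoc (Lm p), hLmp, Matrix.one_mul, hUl]
  have hUcol : U *ᵥ er0 = p := by rw [mulVec_er0]; exact hp_def.symm
  have hV0 : V *ᵥ er0 = er0 := by
    rw [hV_def, ← Matrix.mulVec_mulVec, hUcol, Lm_mulVec, qmul_conj_self', hp]
    rfl
  have hVrow0 : ![V 0 0, V 0 1, V 0 2, V 0 3] = er0 := by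
    have h : Vᵀ *ᵥ er0 = er0 := by
      conv_lhs => rw [← hV0, Matrix.mulVec_mulVec, hVl, Matrix.one_mulVec]
    rw [mulVec_er0] at h
    convert h using 2 <;> simp [Matrix.transpose_apply]
  have hV01 : V 0 1 = 0 := by
    have := congrFun hVrow0 1
    simpa [er0] using this
  obtain ⟨uu, huu_def⟩ : ∃ uu, uu = ![0, V 1 1, V 2 1, V 3 1] := ⟨_, rfl⟩
  have hVe1 : V *ᵥ er1 = uu := by
    rw [mulVec_er1, huu_def]
    funext i
    fin_cases i <;> simp [hV01]
  have hnu : nq uu = 1 := by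
    have h11 := congrFun (congrFun hVl 1) 1
    simp [Matrix.mul_apply, Fin.sum_univ_four, Matrix.one_apply,
      Matrix.transpose_apply] at h11
    rw [huu_def]
    simp [nq]
    linear_combination h11 - V 0 1 * hV01
  obtain ⟨q, hq, hqrot⟩ := exists_rot_to_e1 uu (by simp [huu_def]) hnu
  have hqc : qmul q (qconj q) = ![1,0,0,0] := by rw [qmul_conj_self, hq]
  have hqc' : qmul (qconj q) q = ![1,0,0,0] := by rw [qmul_conj_self', hq]
  obtain ⟨W, hW_def⟩ : ∃ W, W = Lm q * (Rm (qconj q) * V) := ⟨_, rfl⟩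
  have hWl : Wᵀ * W = 1 := by
    rw [hW_def, Matrix.transpose_mul, Matrix.transpose_mul, Lm_transpose,
      Rm_transpose, qconj_qconj]
    calc Vᵀ * Rm q * Lm (qconj q) * (Lm q * (Rm (qconj q) * V))
        = Vᵀ * (Rm q * ((Lm (qconj q) * Lm q) * (Rm (qconj q) * V))) := by
          simp only [Matrix.mul_assoc]
      _ = Vᵀ * (Rm q * Rm (qconj q)) * V := by
          rw [Lm_mul, hqc', Lm_one, Matrix.one_mul]
          simp only [Matrix.mul_assoc]
      _ = 1 := by
          rw [Rm_mul, hqc', Rm_one, Matrix.mul_one, hVl]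
  have hW0 : W *ᵥ er0 = er0 := by
    rw [hW_def, ← Matrix.mulVec_mulVec, ← Matrix.mulVec_mulVec, hV0,
      Rm_mulVec, Lm_mulVec]
    show qmul q (qmul ![1,0,0,0] (qconj q)) = er0
    rw [qmul_er0_left, hqc]
    rfl
  have hW1 : W *ᵥ er1 = er1 := by
    rw [hW_def, ← Matrix.mulVec_mulVec, ← Matrix.mulVec_mulVec, hVe1,
      Rm_mulVec, Lm_mulVec, hqrot]
  have hWrow0 : ![W 0 0, W 0 1, W 0 2, W 0 3] = er0 := by
    have h : Wᵀ *ᵥ er0 = er0 := by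
      conv_lhs => rw [← hW0, Matrix.mulVec_mulVec, hWl, Matrix.one_mulVec]
    rw [mulVec_er0] at h
    convert h using 2 <;> simp [Matrix.transpose_apply]
  have hWrow1 : ![W 1 0, W 1 1, W 1 2, W 1 3] = er1 := by
    have h : Wᵀ *ᵥ er1 = er1 := by
      conv_lhs => rw [← hW1, Matrix.mulVec_mulVec, hWl, Matrix.one_mulVec]
    rw [mulVec_er1] at h
    convert h using 2 <;> simp [Matrix.transpose_apply]
  rw [mulVec_er0] at hW0
  rw [mulVec_er1] at hW1
  have h02 : W 0 2 = 0 := by simpa [er0] using congrFun hWrow0 2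
  have h03 : W 0 3 = 0 := by simpa [er0] using congrFun hWrow0 3
  have h12 : W 1 2 = 0 := by simpa [er1] using congrFun hWrow1 2
  have h13 : W 1 3 = 0 := by simpa [er1] using congrFun hWrow1 3
  have h00 : W 0 0 = 1 := by simpa [er0] using congrFun hW0 0
  have h10 : W 1 0 = 0 := by simpa [er0] using congrFun hW0 1
  have h20 : W 2 0 = 0 := by simpa [er0] using congrFun hW0 2
  have h30 : W 3 0 = 0 := by simpa [er0] using congrFun hW0 3
  have h01 : W 0 1 = 0 := by simpa [er1] using congrFun hW1 0
  have h11 : W 1 1 = 1 := by simpa [er1] using congrFun hW1 1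
  have h21 : W 2 1 = 0 := by simpa [er1] using congrFun hW1 2
  have h31 : W 3 1 = 0 := by simpa [er1] using congrFun hW1 3
  obtain ⟨a, ha_def⟩ : ∃ a : ℝ, a = W 2 2 := ⟨_, rfl⟩
  obtain ⟨b, hb_def⟩ : ∃ b : ℝ, b = W 3 2 := ⟨_, rfl⟩
  obtain ⟨c, hc_def⟩ : ∃ c : ℝ, c = W 2 3 := ⟨_, rfl⟩
  obtain ⟨d, hd_def⟩ : ∃ d : ℝ, d = W 3 3 := ⟨_, rfl⟩
  have hWmat : W = !![1,0,0,0; 0,1,0,0; 0,0,a,c; 0,0,b,d] := by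
    ext i j
    fin_cases i <;> fin_cases j <;>
      simp [h00, h01, h02, h03, h10, h11, h12, h13, h20, h21, h30, h31,
        ← ha_def, ← hb_def, ← hc_def, ← hd_def, Matrix.vecHead, Matrix.vecTail]
  have hdetV : V.det = 1 := by
    rw [hV_def, Matrix.det_mul, Lm_det, nq_qconj, hp, hdet]
    norm_num
  have hdetW : W.det = 1 := by
    rw [hW_def, Matrix.det_mul, Matrix.det_mul, Lm_det, Rm_det, nq_qconj,
      hq, hdetV]
    norm_num
  rw [hWmat] at hdetW
  have hdet2 : a * d - c * b = 1 := by
    simp [Matrix.det_succ_row_zero, Fin.sum_univ_succ] at hdetW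
    linear_combination hdetW
  have e22 := congrFun (congrFun hWl 2) 2
  have e23 := congrFun (congrFun hWl 2) 3
  simp [Matrix.mul_apply, Fin.sum_univ_four, Matrix.one_apply,
    Matrix.transpose_apply, h02, h03, h12, h13,
    ← ha_def, ← hb_def, ← hc_def, ← hd_def] at e22 e23
  have h22 : a^2 + b^2 = 1 := by linear_combination e22
  have hcb : c = -b := by linear_combination a*e23 - b*hdet2 - c*h22
  have hda : d = a := by linear_combination b*e23 + a*hdet2 - d*h22
  obtain ⟨x, y, hxy, hxa, hxb⟩ := half_angle a b h22
  refine ⟨p, q, ![x, y, 0, 0], hp, hq, by simp [nq]; linear_combination hxy, ?_⟩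
  have hWfin : W = Lm ![x,y,0,0] * Rm (qconj ![x,y,0,0]) := by
    rw [hWmat]
    ext i j
    fin_cases i <;> fin_cases j <;>
      simp [Lm, Rm, qconj, Matrix.mul_apply, Fin.sum_univ_four,
        Matrix.vecHead, Matrix.vecTail] <;>
      first
        | ring1
        | linear_combination hxy
        | linear_combination -hxy
        | linear_combination hxa
        | linear_combination -hxa
        | linear_combination hxb
        | linear_combination -hxb
        | linear_combination hcb - hxb
        | linear_combination hcb + hxb
        | linear_combination hda - hxa
        | linear_combination hda + hxa
        | linear_combination -hcb - hxb
        | linear_combination -hcb + hxb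
        | linear_combination -hda - hxa
        | linear_combination -hda + hxa
  have hUV : U = Lm p * V := by
    rw [hV_def, ← Matrix.mul_assoc, hLmp, Matrix.one_mul]
  have hVW : Lm (qconj q) * (Rm q * W) = V := by
    rw [hW_def]
    calc Lm (qconj q) * (Rm q * (Lm q * (Rm (qconj q) * V)))
        = Lm (qconj q) * ((Rm q * Lm q) * (Rm (qconj q) * V)) := by
          simp only [Matrix.mul_assoc]
      _ = Lm (qconj q) * ((Lm q * Rm q) * (Rm (qconj q) * V)) := by
          rw [← Lm_Rm_comm]
      _ = (Lm (qconj q) * Lm q) * ((Rm q * Rm (qconj q)) * V) := by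
          simp only [Matrix.mul_assoc]
      _ = V := by
          rw [Lm_mul, hqc', Lm_one, Rm_mul, hqc', Rm_one, Matrix.one_mul,
            Matrix.one_mul]
  rw [hUV, ← hWfin, hVW]

/-! ### Complex/circuit side -/

noncomputable def cc : ℂ := ((Real.sqrt 2)⁻¹ : ℝ)

open Complex in
noncomputable def Mmat : Matrix (Fin 4) (Fin 4) ℂ :=
  !![cc, 0, 0, cc*I;
     0, cc*I, cc, 0;
     0, cc*I, -cc, 0;
     cc, 0, 0, -cc*I]

open Complex in
noncomputable def alphaM (r : Fin 4 → ℝ) : Matrix (Fin 2) (Fin 2) ℂ :=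
  !![(r 0 : ℂ) + r 3 * I, (r 1 : ℂ) * I - r 2;
     (r 1 : ℂ) * I + r 2, (r 0 : ℂ) - r 3 * I]

open Complex in
noncomputable def betaM (r : Fin 4 → ℝ) : Matrix (Fin 2) (Fin 2) ℂ :=
  !![(r 0 : ℂ) + r 3 * I, (r 1 : ℂ) * I + r 2;
     (r 1 : ℂ) * I - r 2, (r 0 : ℂ) - r 3 * I]

open Complex in
noncomputable def P2 : Matrix (Fin 2) (Fin 2) ℂ := !![cc, cc; cc*I, -cc*I]
open Complex in
noncomputable def G1 : Matrix (Fin 2) (Fin 2) ℂ := !![cc, cc*I; cc*I, cc]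
open Complex in
noncomputable def G2 : Matrix (Fin 2) (Fin 2) ℂ := !![cc, cc; -cc*I, cc*I]

lemma kron2_explicit (A B : Matrix (Fin 2) (Fin 2) ℂ) :
    kron2 A B =
      !![A 0 0*B 0 0, A 0 0*B 0 1, A 0 1*B 0 0, A 0 1*B 0 1;
         A 0 0*B 1 0, A 0 0*B 1 1, A 0 1*B 1 0, A 0 1*B 1 1;
         A 1 0*B 0 0, A 1 0*B 0 1, A 1 1*B 0 0, A 1 1*B 0 1;
         A 1 0*B 1 0, A 1 0*B 1 1, A 1 1*B 1 0, A 1 1*B 1 1] := by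
  ext i j
  fin_cases i <;> fin_cases j <;>
    simp [kron2, Matrix.reindex_apply, kroneckerMap_apply] <;> rfl

lemma map_mul4 (X Y : Matrix (Fin 4) (Fin 4) ℝ) :
    (X * Y).map Complex.ofReal = X.map Complex.ofReal * Y.map Complex.ofReal := by
  ext i j
  simp [Matrix.map_apply, Matrix.mul_apply, Fin.sum_univ_four]

lemma hcc2 : (cc * cc) * 2 = 1 := by
  have h : Real.sqrt 2 ≠ 0 := by positivity
  have h2 : Real.sqrt 2 * Real.sqrt 2 = 2 := Real.mul_self_sqrt (by norm_num)
  have h3 : ((Real.sqrt 2)⁻¹ * (Real.sqrt 2)⁻¹ * 2 : ℝ) = 1 := by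
    rw [← mul_inv, h2]
    norm_num
  simp only [cc]
  exact_mod_cast congrArg Complex.ofReal h3

lemma conj_cc : (starRingEnd ℂ) cc = cc := by
  simp only [cc, Complex.conj_ofReal]

lemma key1 (r : Fin 4 → ℝ) :
    Mmat * (Lm r).map Complex.ofReal = kron2 1 (alphaM r) * Mmat := by
  rw [kron2_explicit]
  ext i j
  fin_cases i <;> fin_cases j <;>
    simp [Mmat, alphaM, Lm, Matrix.mul_apply, Matrix.map_apply,
      Fin.sum_univ_four, Matrix.one_apply] <;>
    first
      | ring1
      | linear_combination (-(cc*(r 1:ℂ))) * Complex.I_sq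
      | linear_combination (-(cc*(r 3:ℂ))) * Complex.I_sq
      | linear_combination (cc*(r 1:ℂ)) * Complex.I_sq
      | linear_combination (cc*(r 3:ℂ)) * Complex.I_sq

lemma key2 (r : Fin 4 → ℝ) :
    Mmat * (Rm r).map Complex.ofReal = kron2 (betaM r) 1 * Mmat := by
  rw [kron2_explicit]
  ext i j
  fin_cases i <;> fin_cases j <;>
    simp [Mmat, betaM, Rm, Matrix.mul_apply, Matrix.map_apply,
      Fin.sum_univ_four, Matrix.one_apply] <;>
    first
      | ring1
      | linear_combination (-(cc*(r 1:ℂ))) * Complex.I_sq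
      | linear_combination (-(cc*(r 3:ℂ))) * Complex.I_sq
      | linear_combination (cc*(r 1:ℂ)) * Complex.I_sq
      | linear_combination (cc*(r 3:ℂ)) * Complex.I_sq

lemma hMunit : Mmatᴴ * Mmat = 1 := by
  ext i j
  fin_cases i <;> fin_cases j <;>
    simp [Mmat, Matrix.mul_apply, Fin.sum_univ_four, Matrix.one_apply,
      Matrix.conjTranspose_apply, _root_.map_mul, Complex.conj_ofReal,
      Complex.conj_I, conj_cc] <;>
    first
      | ring1
      | linear_combination hcc2
      | linear_combination (-(2:ℂ)*cc*cc) * Complex.I_sq + hcc2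
      | linear_combination (-(cc*cc)) * Complex.I_sq + hcc2

lemma hCirc : Mmat = kron2 P2 1 * CNOT * kron2 G1 G2 := by
  rw [kron2_explicit, kron2_explicit]
  ext i j
  fin_cases i <;> fin_cases j <;>
    simp [Mmat, P2, G1, G2, CNOT, Matrix.mul_apply, Fin.sum_univ_four,
      Matrix.one_apply] <;>
    first
      | ring1
      | linear_combination (-(cc*cc*cc)) * Complex.I_sq
      | linear_combination (-(cc*cc*cc)*Complex.I) * Complex.I_sq
      | linear_combination (-(cc*cc*cc)*Complex.I) * Complex.I_sq + (cc*Complex.I) * hcc2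
      | linear_combination (-(2:ℂ)*cc*cc*cc) * Complex.I_sq + cc * hcc2
      | linear_combination ((2:ℂ)*cc*cc*cc) * Complex.I_sq + (-cc) * hcc2
      | linear_combination (-(cc*Complex.I)) * hcc2
      | linear_combination (cc*cc*cc) * Complex.I_sq + (-cc) * hcc2
      | linear_combination (cc*cc*cc*Complex.I) * Complex.I_sq + (-(cc*Complex.I)) * hcc2
      | linear_combination (cc*cc*cc*Complex.I) * Complex.I_sq

lemma kron2_mul (A B C D : Matrix (Fin 2) (Fin 2) ℂ) :
    kron2 A B * kron2 C D = kron2 (A * C) (B * D) := by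
  rw [kron2_explicit A B, kron2_explicit C D, kron2_explicit (A*C) (B*D)]
  ext i j
  fin_cases i <;> fin_cases j <;>
    simp [Matrix.mul_apply, Fin.sum_univ_four, Fin.sum_univ_two] <;> ring1

lemma kron2_conjT (A B : Matrix (Fin 2) (Fin 2) ℂ) :
    (kron2 A B)ᴴ = kron2 Aᴴ Bᴴ := by
  rw [kron2_explicit A B, kron2_explicit Aᴴ Bᴴ]
  ext i j
  fin_cases i <;> fin_cases j <;>
    simp [Matrix.conjTranspose_apply, _root_.map_mul] <;> ring1

lemma CNOT_H : CNOTᴴ = CNOT := by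
  ext i j
  fin_cases i <;> fin_cases j <;>
    simp [CNOT, Matrix.conjTranspose_apply, Matrix.vecHead, Matrix.vecTail]

lemma P2_mem : P2 ∈ Matrix.unitaryGroup (Fin 2) ℂ := by
  rw [Matrix.mem_unitaryGroup_iff, Matrix.star_eq_conjTranspose]
  ext i j
  fin_cases i <;> fin_cases j <;>
    simp [P2, Matrix.mul_apply, Fin.sum_univ_two, Matrix.one_apply,
      Matrix.conjTranspose_apply, _root_.map_mul, Complex.conj_ofReal,
      Complex.conj_I, conj_cc] <;>
    first
      | ring1
      | linear_combination hcc2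
      | linear_combination (-(2:ℂ)*cc*cc) * Complex.I_sq + hcc2
      | linear_combination (-(cc*cc)) * Complex.I_sq + hcc2

lemma G1_mem : G1 ∈ Matrix.unitaryGroup (Fin 2) ℂ := by
  rw [Matrix.mem_unitaryGroup_iff, Matrix.star_eq_conjTranspose]
  ext i j
  fin_cases i <;> fin_cases j <;>
    simp [G1, Matrix.mul_apply, Fin.sum_univ_two, Matrix.one_apply,
      Matrix.conjTranspose_apply, _root_.map_mul, Complex.conj_ofReal,
      Complex.conj_I, conj_cc] <;>
    first
      | ring1
      | linear_combination hcc2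
      | linear_combination (-(2:ℂ)*cc*cc) * Complex.I_sq + hcc2
      | linear_combination (-(cc*cc)) * Complex.I_sq + hcc2

lemma G2_mem : G2 ∈ Matrix.unitaryGroup (Fin 2) ℂ := by
  rw [Matrix.mem_unitaryGroup_iff, Matrix.star_eq_conjTranspose]
  ext i j
  fin_cases i <;> fin_cases j <;>
    simp [G2, Matrix.mul_apply, Fin.sum_univ_two, Matrix.one_apply,
      Matrix.conjTranspose_apply, _root_.map_mul, Complex.conj_ofReal,
      Complex.conj_I, conj_cc] <;>
    first
      | ring1
      | linear_combination hcc2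
      | linear_combination (-(2:ℂ)*cc*cc) * Complex.I_sq + hcc2
      | linear_combination (-(cc*cc)) * Complex.I_sq + hcc2

lemma alpha_mem (r : Fin 4 → ℝ) (hr : nq r = 1) :
    alphaM r ∈ Matrix.unitaryGroup (Fin 2) ℂ := by
  have hrc : ((r 0 : ℂ))^2 + (r 1 : ℂ)^2 + (r 2 : ℂ)^2 + (r 3 : ℂ)^2 = 1 := by
    have h : r 0^2 + r 1^2 + r 2^2 + r 3^2 = 1 := hr
    exact_mod_cast congrArg Complex.ofReal h
  rw [Matrix.mem_unitaryGroup_iff, Matrix.star_eq_conjTranspose]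
  ext i j
  fin_cases i <;> fin_cases j <;>
    simp [alphaM, Matrix.mul_apply, Fin.sum_univ_two, Matrix.one_apply,
      Matrix.conjTranspose_apply, _root_.map_mul, _root_.map_add, _root_.map_sub,
      Complex.conj_ofReal, Complex.conj_I] <;>
    first
      | ring1
      | linear_combination (-((r 3:ℂ)*(r 3:ℂ)) - (r 1:ℂ)*(r 1:ℂ)) * Complex.I_sq + hrc

lemma beta_mem (r : Fin 4 → ℝ) (hr : nq r = 1) :
    betaM r ∈ Matrix.unitaryGroup (Fin 2) ℂ := by
  have hrc : ((r 0 : ℂ))^2 + (r 1 : ℂ)^2 + (r 2 : ℂ)^2 + (r 3 : ℂ)^2 = 1 := by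
    have h : r 0^2 + r 1^2 + r 2^2 + r 3^2 = 1 := hr
    exact_mod_cast congrArg Complex.ofReal h
  rw [Matrix.mem_unitaryGroup_iff, Matrix.star_eq_conjTranspose]
  ext i j
  fin_cases i <;> fin_cases j <;>
    simp [betaM, Matrix.mul_apply, Fin.sum_univ_two, Matrix.one_apply,
      Matrix.conjTranspose_apply, _root_.map_mul, _root_.map_add, _root_.map_sub,
      Complex.conj_ofReal, Complex.conj_I] <;>
    first
      | ring1
      | linear_combination (-((r 3:ℂ)*(r 3:ℂ)) - (r 1:ℂ)*(r 1:ℂ)) * Complex.I_sq + hrc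

end SO4Decomp

theorem so4_two_cnot_decomposition (U : Matrix (Fin 4) (Fin 4) ℝ)
    (hU : U ∈ Matrix.orthogonalGroup (Fin 4) ℝ) (hdet : U.det = 1) :
    ∃ A₁ A₂ B₁ B₂ C₁ C₂ : Matrix (Fin 2) (Fin 2) ℂ,
      A₁ ∈ Matrix.unitaryGroup (Fin 2) ℂ ∧ A₂ ∈ Matrix.unitaryGroup (Fin 2) ℂ ∧
      B₁ ∈ Matrix.unitaryGroup (Fin 2) ℂ ∧ B₂ ∈ Matrix.unitaryGroup (Fin 2) ℂ ∧
      C₁ ∈ Matrix.unitaryGroup (Fin 2) ℂ ∧ C₂ ∈ Matrix.unitaryGroup (Fin 2) ℂ ∧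
      U.map (Complex.ofReal) =
        kron2 A₁ A₂ * CNOT * kron2 B₁ B₂ * CNOT * kron2 C₁ C₂ := by
  open SO4Decomp in
  have hUl : Uᵀ * U = 1 := by
    have h := hU.1
    rwa [Matrix.star_eq_conjTranspose,
      Matrix.conjTranspose_eq_transpose_of_trivial] at h
  have hUr : U * Uᵀ = 1 := by
    have h := hU.2
    rwa [Matrix.star_eq_conjTranspose,
      Matrix.conjTranspose_eq_transpose_of_trivial] at h
  obtain ⟨p, q, w, hp, hq, hw, hfact⟩ := SO4Decomp.exists_quat_decomp U hUl hUr hdet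
  have step : ∀ X Y K K' : Matrix (Fin 4) (Fin 4) ℂ,
      SO4Decomp.Mmat * X = K * SO4Decomp.Mmat →
      SO4Decomp.Mmat * Y = K' * SO4Decomp.Mmat →
      SO4Decomp.Mmat * (X * Y) = (K * K') * SO4Decomp.Mmat := by
    intro X Y K K' h1 h2
    rw [← Matrix.mul_assoc, h1, Matrix.mul_assoc, h2, ← Matrix.mul_assoc]
  obtain ⟨AA, hAA⟩ : ∃ AA, AA = SO4Decomp.betaM q * SO4Decomp.betaM (SO4Decomp.qconj w) := ⟨_, rfl⟩
  obtain ⟨BB, hBB⟩ : ∃ BB, BB = SO4Decomp.alphaM p * (SO4Decomp.alphaM (SO4Decomp.qconj q) * SO4Decomp.alphaM w) := ⟨_, rfl⟩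
  have hMU : SO4Decomp.Mmat * (U.map Complex.ofReal) = kron2 AA BB * SO4Decomp.Mmat := by
    rw [hfact, SO4Decomp.map_mul4, SO4Decomp.map_mul4, SO4Decomp.map_mul4,
      SO4Decomp.map_mul4]
    have hchain := step _ _ _ _ (SO4Decomp.key1 p)
      (step _ _ _ _ (SO4Decomp.key1 (SO4Decomp.qconj q))
        (step _ _ _ _ (SO4Decomp.key2 q)
          (step _ _ _ _ (SO4Decomp.key1 w) (SO4Decomp.key2 (SO4Decomp.qconj w)))))
    rw [hchain]
    congr 1
    rw [SO4Decomp.kron2_mul, SO4Decomp.kron2_mul, SO4Decomp.kron2_mul,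
      SO4Decomp.kron2_mul]
    simp only [Matrix.one_mul, Matrix.mul_one]
    rw [hAA, hBB]
  have hUmap : U.map Complex.ofReal = SO4Decomp.Mmatᴴ * (kron2 AA BB * SO4Decomp.Mmat) := by
    calc U.map Complex.ofReal = (SO4Decomp.Mmatᴴ * SO4Decomp.Mmat) * U.map Complex.ofReal := by
          rw [SO4Decomp.hMunit, Matrix.one_mul]
      _ = SO4Decomp.Mmatᴴ * (SO4Decomp.Mmat * U.map Complex.ofReal) := by
          rw [Matrix.mul_assoc]
      _ = _ := by rw [hMU]
  have hMH : SO4Decomp.Mmatᴴ =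
      kron2 SO4Decomp.G1ᴴ SO4Decomp.G2ᴴ * (CNOT * kron2 SO4Decomp.P2ᴴ 1) := by
    rw [SO4Decomp.hCirc, Matrix.conjTranspose_mul, Matrix.conjTranspose_mul,
      SO4Decomp.kron2_conjT, SO4Decomp.kron2_conjT, SO4Decomp.CNOT_H,
      Matrix.conjTranspose_one]
  have hmid : kron2 SO4Decomp.P2ᴴ 1 * (kron2 AA BB * kron2 SO4Decomp.P2 1) =
      kron2 (SO4Decomp.P2ᴴ * (AA * SO4Decomp.P2)) BB := by
    rw [SO4Decomp.kron2_mul, SO4Decomp.kron2_mul]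
    simp only [Matrix.one_mul, Matrix.mul_one, Matrix.mul_assoc]
  refine ⟨SO4Decomp.G1ᴴ, SO4Decomp.G2ᴴ, SO4Decomp.P2ᴴ * (AA * SO4Decomp.P2), BB,
    SO4Decomp.G1, SO4Decomp.G2, ?_, ?_, ?_, ?_, ?_, ?_, ?_⟩
  · rw [← Matrix.star_eq_conjTranspose]
    exact Unitary.star_mem SO4Decomp.G1_mem
  · rw [← Matrix.star_eq_conjTranspose]
    exact Unitary.star_mem SO4Decomp.G2_mem
  · have hAAmem : AA ∈ Matrix.unitaryGroup (Fin 2) ℂ := by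
      rw [hAA]
      exact mul_mem (SO4Decomp.beta_mem q hq)
        (SO4Decomp.beta_mem _ (by rw [SO4Decomp.nq_qconj]; exact hw))
    have hP2H : SO4Decomp.P2ᴴ ∈ Matrix.unitaryGroup (Fin 2) ℂ := by
      rw [← Matrix.star_eq_conjTranspose]
      exact Unitary.star_mem SO4Decomp.P2_mem
    exact mul_mem hP2H (mul_mem hAAmem SO4Decomp.P2_mem)
  · rw [hBB]
    exact mul_mem (SO4Decomp.alpha_mem p hp)
      (mul_mem (SO4Decomp.alpha_mem _ (by rw [SO4Decomp.nq_qconj]; exact hq))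
        (SO4Decomp.alpha_mem w hw))
  · exact SO4Decomp.G1_mem
  · exact SO4Decomp.G2_mem
  · calc U.map Complex.ofReal
        = SO4Decomp.Mmatᴴ * (kron2 AA BB * SO4Decomp.Mmat) := hUmap
      _ = (kron2 SO4Decomp.G1ᴴ SO4Decomp.G2ᴴ * (CNOT * kron2 SO4Decomp.P2ᴴ 1)) *
          (kron2 AA BB * (kron2 SO4Decomp.P2 1 * CNOT * kron2 SO4Decomp.G1 SO4Decomp.G2)) := by
          rw [← hMH, ← SO4Decomp.hCirc]
      _ = kron2 SO4Decomp.G1ᴴ SO4Decomp.G2ᴴ * CNOT *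
          (kron2 SO4Decomp.P2ᴴ 1 * (kron2 AA BB * kron2 SO4Decomp.P2 1)) *
          CNOT * kron2 SO4Decomp.G1 SO4Decomp.G2 := by
          simp only [Matrix.mul_assoc]
      _ = _ := by rw [hmid]
end

section
/- For 0 ≤ t ≤ π/2 and n ≥ 1, 0 ≤ e^{−nt²/6} − (sin t / t)^n ≤ e^{−nt²/6}·(n t⁴ / 138), where (sin t / t) is 1 at t = 0. -/
open Real

/-- Helper: if `f 0 = 0` and the derivative is nonneg on `[0,∞)`, then `f` is nonneg there. -/
lemma my_nonneg_of_deriv (f f' : ℝ → ℝ) (hd : ∀ x, HasDerivAt f (f' x) x)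
    (h0 : f 0 = 0) (hf' : ∀ x, 0 ≤ x → 0 ≤ f' x) {x : ℝ} (hx : 0 ≤ x) : 0 ≤ f x := by
  have hmono : MonotoneOn f (Set.Ici 0) := by
    apply monotoneOn_of_deriv_nonneg (convex_Ici 0)
    · exact fun y _ => (hd y).continuousAt.continuousWithinAt
    · exact fun y _ => (hd y).differentiableAt.differentiableWithinAt
    · intro y hy
      rw [interior_Ici] at hy
      rw [(hd y).deriv]
      exact hf' y hy.le
  calc (0:ℝ) = f 0 := h0.symm
    _ ≤ f x := hmono Set.self_mem_Ici hx hx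

lemma my_sin_ge3 {x : ℝ} (hx : 0 ≤ x) : x - x ^ 3 / 6 ≤ sin x := by
  have := my_nonneg_of_deriv (fun x => sin x - (x - x ^ 3 / 6))
      (fun x => cos x - (1 - 3 * x ^ 2 / 6))
      (fun x => by
        have h : HasDerivAt (fun x : ℝ => sin x - (x - x ^ 3 / 6))
            (cos x - (1 - 3 * x ^ (3-1) / 6)) x :=
          (Real.hasDerivAt_sin x).sub ((hasDerivAt_id x).sub ((hasDerivAt_pow 3 x).div_const 6))
        simpa using h)
      (by simp)
      (fun y _ => by nlinarith [Real.one_sub_sq_div_two_le_cos (x := y)]) hx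
  simpa using this

lemma my_cos_le4 {x : ℝ} (hx : 0 ≤ x) : cos x ≤ 1 - x ^ 2 / 2 + x ^ 4 / 24 := by
  have := my_nonneg_of_deriv (fun x => 1 - x ^ 2 / 2 + x ^ 4 / 24 - cos x)
      (fun x => -(2 * x ^ 1) / 2 + 4 * x ^ 3 / 24 - (-sin x))
      (fun x => by
        have h := ((((hasDerivAt_const x (1:ℝ)).sub ((hasDerivAt_pow 2 x).div_const 2)).add
            ((hasDerivAt_pow 4 x).div_const 24)).sub (Real.hasDerivAt_cos x))
        refine h.congr_deriv ?_
        push_cast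
        ring)
      (by norm_num)
      (fun y hy => by nlinarith [my_sin_ge3 hy]) hx
  linarith [this]

lemma my_sin_le5 {x : ℝ} (hx : 0 ≤ x) : sin x ≤ x - x ^ 3 / 6 + x ^ 5 / 120 := by
  have := my_nonneg_of_deriv (fun x => x - x ^ 3 / 6 + x ^ 5 / 120 - sin x)
      (fun x => 1 - 3 * x ^ 2 / 6 + 5 * x ^ 4 / 120 - cos x)
      (fun x => by
        have h : HasDerivAt (fun x : ℝ => x - x ^ 3 / 6 + x ^ 5 / 120 - sin x)
            (1 - 3 * x ^ (3-1) / 6 + 5 * x ^ (5-1) / 120 - cos x) x :=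
          (((hasDerivAt_id x).sub ((hasDerivAt_pow 3 x).div_const 6)).add
            ((hasDerivAt_pow 5 x).div_const 120)).sub (Real.hasDerivAt_sin x)
        simpa using h)
      (by norm_num)
      (fun y hy => by nlinarith [my_cos_le4 hy]) hx
  linarith [this]

lemma my_cos_ge6 {x : ℝ} (hx : 0 ≤ x) : 1 - x ^ 2 / 2 + x ^ 4 / 24 - x ^ 6 / 720 ≤ cos x := by
  have := my_nonneg_of_deriv (fun x => cos x - (1 - x ^ 2 / 2 + x ^ 4 / 24 - x ^ 6 / 720))
      (fun x => -sin x - (-(2 * x ^ 1) / 2 + 4 * x ^ 3 / 24 - 6 * x ^ 5 / 720))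
      (fun x => by
        have h := (Real.hasDerivAt_cos x).sub
            ((((hasDerivAt_const x (1:ℝ)).sub ((hasDerivAt_pow 2 x).div_const 2)).add
              ((hasDerivAt_pow 4 x).div_const 24)).sub ((hasDerivAt_pow 6 x).div_const 720))
        refine h.congr_deriv ?_
        push_cast
        ring)
      (by norm_num)
      (fun y hy => by nlinarith [my_sin_le5 hy]) hx
  linarith [this]

lemma my_sin_ge7 {x : ℝ} (hx : 0 ≤ x) :
    x - x ^ 3 / 6 + x ^ 5 / 120 - x ^ 7 / 5040 ≤ sin x := by
  have := my_nonneg_of_deriv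
      (fun x => sin x - (x - x ^ 3 / 6 + x ^ 5 / 120 - x ^ 7 / 5040))
      (fun x => cos x - (1 - 3 * x ^ 2 / 6 + 5 * x ^ 4 / 120 - 7 * x ^ 6 / 5040))
      (fun x => by
        have h : HasDerivAt
            (fun x : ℝ => sin x - (x - x ^ 3 / 6 + x ^ 5 / 120 - x ^ 7 / 5040))
            (cos x - (1 - 3 * x ^ (3-1) / 6 + 5 * x ^ (5-1) / 120 - 7 * x ^ (7-1) / 5040)) x :=
          (Real.hasDerivAt_sin x).sub
            ((((hasDerivAt_id x).sub ((hasDerivAt_pow 3 x).div_const 6)).add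
              ((hasDerivAt_pow 5 x).div_const 120)).sub ((hasDerivAt_pow 7 x).div_const 5040))
        simpa using h)
      (by norm_num)
      (fun y hy => by nlinarith [my_cos_ge6 hy]) hx
  linarith [this]

/-- degree-4 lower truncation of `exp`. -/
lemma my_exp_ge {x : ℝ} (hx : 0 ≤ x) :
    1 + x + x ^ 2 / 2 + x ^ 3 / 6 + x ^ 4 / 24 ≤ exp x := by
  have h := Real.sum_le_exp_of_nonneg hx 5
  simp [Finset.sum_range_succ, Nat.factorial] at h
  linarith [h]

lemma my_exp_neg_le {x : ℝ} (hx : 0 ≤ x) :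
    exp (-x) ≤ 1 - x + x ^ 2 / 2 - x ^ 3 / 6 + x ^ 4 / 24 := by
  have hQ := my_exp_ge hx
  have hpos : (0:ℝ) < exp x := exp_pos x
  have key : 1 ≤ (1 - x + x ^ 2 / 2 - x ^ 3 / 6 + x ^ 4 / 24) *
      (1 + x + x ^ 2 / 2 + x ^ 3 / 6 + x ^ 4 / 24) := by
    nlinarith [pow_nonneg hx 6, pow_nonneg hx 8]
  have hQpos : (0:ℝ) < 1 + x + x ^ 2 / 2 + x ^ 3 / 6 + x ^ 4 / 24 := by positivity
  have hPpos : 0 < 1 - x + x ^ 2 / 2 - x ^ 3 / 6 + x ^ 4 / 24 :=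
    lt_of_lt_of_le (div_pos one_pos hQpos) ((div_le_iff₀ hQpos).mpr (by linarith [key]))
  have h1 : 1 ≤ (1 - x + x ^ 2 / 2 - x ^ 3 / 6 + x ^ 4 / 24) * exp x := by
    calc (1:ℝ) ≤ _ := key
      _ ≤ _ := by
        apply mul_le_mul_of_nonneg_left hQ hPpos.le
  rw [Real.exp_neg]
  rw [inv_le_iff_one_le_mul₀ hpos]
  linarith [h1]

lemma my_exp_neg_ge {u : ℝ} (h0 : 0 ≤ u) (h4 : u ≤ 4) : (1 - u / 4) ^ 4 ≤ exp (-u) := by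
  have h1 : 1 - u / 4 ≤ exp (-(u / 4)) := by
    have := Real.add_one_le_exp (-(u / 4)); linarith
  have hnn : (0:ℝ) ≤ 1 - u / 4 := by linarith
  calc (1 - u / 4) ^ 4 ≤ exp (-(u / 4)) ^ 4 := pow_le_pow_left₀ hnn h1 4
    _ = exp ((4:ℕ) * -(u / 4)) := (Real.exp_nat_mul _ 4).symm
    _ = exp (-u) := by congr 1; push_cast; ring

lemma my_poly_ub {s : ℝ} (h0 : 0 ≤ s) (h1 : s ≤ 2.481) :
    1 - s / 6 + s ^ 2 / 120 ≤ (1 - s / 6 / 4) ^ 4 := by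
  nlinarith [sq_nonneg s, mul_nonneg (mul_nonneg h0 h0) h0, sq_nonneg (s * s)]

lemma my_poly_lb {s : ℝ} (h0 : 0 ≤ s) (h1 : s ≤ 2.481) :
    1 - (s / 6 + s ^ 2 / 138) + (s / 6 + s ^ 2 / 138) ^ 2 / 2
      - (s / 6 + s ^ 2 / 138) ^ 3 / 6 + (s / 6 + s ^ 2 / 138) ^ 4 / 24
      ≤ 1 - s / 6 + s ^ 2 / 120 - s ^ 3 / 5040 := by
  nlinarith [sq_nonneg s, mul_nonneg (mul_nonneg h0 h0) h0, sq_nonneg (s * s),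
    mul_nonneg (mul_nonneg (mul_nonneg h0 h0) h0) (sq_nonneg s),
    mul_nonneg (sq_nonneg (s*s)) (sq_nonneg s), sq_nonneg (s - 2.481),
    mul_nonneg (mul_nonneg h0 h0) (sq_nonneg (s - 2.481))]

lemma my_sinc_ub {t : ℝ} (ht : 0 < t) (hs : t ^ 2 ≤ 2.481) :
    sin t / t ≤ exp (-(t ^ 2 / 6)) := by
  rw [div_le_iff₀ ht]
  have h5 := my_sin_le5 ht.le
  have he := my_exp_neg_ge (u := t ^ 2 / 6) (by positivity) (by nlinarith)
  have hp := my_poly_ub (s := t ^ 2) (sq_nonneg t) hs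
  have h2 : (1 - t ^ 2 / 6 + (t ^ 2) ^ 2 / 120) * t ≤ (1 - t ^ 2 / 6 / 4) ^ 4 * t :=
    mul_le_mul_of_nonneg_right hp ht.le
  have h3 : (1 - t ^ 2 / 6 / 4) ^ 4 * t ≤ exp (-(t ^ 2 / 6)) * t :=
    mul_le_mul_of_nonneg_right he ht.le
  nlinarith [h5, h2, h3]

lemma my_sinc_lb {t : ℝ} (ht : 0 < t) (hs : t ^ 2 ≤ 2.481) :
    exp (-(t ^ 2 / 6 + t ^ 4 / 138)) ≤ sin t / t := by
  rw [le_div_iff₀ ht]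
  have h7 := my_sin_ge7 ht.le
  have he := my_exp_neg_le (x := t ^ 2 / 6 + t ^ 4 / 138) (by positivity)
  have hp := my_poly_lb (s := t ^ 2) (sq_nonneg t) hs
  have h1 : exp (-(t ^ 2 / 6 + t ^ 4 / 138)) * t ≤
      (1 - (t ^ 2 / 6 + t ^ 4 / 138) + (t ^ 2 / 6 + t ^ 4 / 138) ^ 2 / 2
        - (t ^ 2 / 6 + t ^ 4 / 138) ^ 3 / 6 + (t ^ 2 / 6 + t ^ 4 / 138) ^ 4 / 24) * t :=
    mul_le_mul_of_nonneg_right he ht.le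
  have h2 : (1 - (t ^ 2 / 6 + t ^ 4 / 138) + (t ^ 2 / 6 + t ^ 4 / 138) ^ 2 / 2
        - (t ^ 2 / 6 + t ^ 4 / 138) ^ 3 / 6 + (t ^ 2 / 6 + t ^ 4 / 138) ^ 4 / 24) * t ≤
      (1 - t ^ 2 / 6 + (t ^ 2) ^ 2 / 120 - (t ^ 2) ^ 3 / 5040) * t := by
    apply mul_le_mul_of_nonneg_right _ ht.le
    nlinarith [hp]
  nlinarith [h1, h2, h7]

theorem exp_sub_sinc_pow_bound (n : ℕ) (hn : 1 ≤ n) (t : ℝ) (h0 : 0 ≤ t) (h1 : t ≤ π / 2) :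
    0 ≤ Real.exp (-(n : ℝ) * t ^ 2 / 6) - (if t = 0 then 1 else Real.sin t / t) ^ n ∧
    Real.exp (-(n : ℝ) * t ^ 2 / 6) - (if t = 0 then 1 else Real.sin t / t) ^ n ≤
      Real.exp (-(n : ℝ) * t ^ 2 / 6) * ((n : ℝ) * t ^ 4 / 138) := by
  by_cases ht : t = 0
  · subst ht; simp
  have ht0 : 0 < t := lt_of_le_of_ne h0 (Ne.symm ht)
  have hs : t ^ 2 ≤ 2.481 := by nlinarith [Real.pi_lt_d2, Real.pi_gt_three]
  have hub := my_sinc_ub ht0 hs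
  have hlb := my_sinc_lb ht0 hs
  have hsinc0 : 0 ≤ sin t / t :=
    div_nonneg (sin_nonneg_of_nonneg_of_le_pi h0 (by linarith [Real.pi_gt_three])) h0
  rw [if_neg ht]
  have hexpn : Real.exp (-(n : ℝ) * t ^ 2 / 6) = exp (-(t ^ 2 / 6)) ^ n := by
    rw [← Real.exp_nat_mul]; congr 1; ring
  have hc_pow : (sin t / t) ^ n ≤ exp (-(t ^ 2 / 6)) ^ n := pow_le_pow_left₀ hsinc0 hub n
  have hb_pow : exp (-(t ^ 2 / 6 + t ^ 4 / 138)) ^ n ≤ (sin t / t) ^ n :=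
    pow_le_pow_left₀ (exp_nonneg _) hlb n
  have hbn : exp (-(t ^ 2 / 6 + t ^ 4 / 138)) ^ n =
      exp (-(t ^ 2 / 6)) ^ n * exp (-((n : ℝ) * t ^ 4 / 138)) := by
    rw [← Real.exp_nat_mul, ← Real.exp_nat_mul, ← Real.exp_add]; congr 1; ring
  have hanpos : 0 ≤ exp (-(t ^ 2 / 6)) ^ n := pow_nonneg (exp_nonneg _) n
  have h1e : 1 - exp (-((n : ℝ) * t ^ 4 / 138)) ≤ (n : ℝ) * t ^ 4 / 138 := by
    have := Real.add_one_le_exp (-((n : ℝ) * t ^ 4 / 138)); linarith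
  constructor
  · rw [hexpn]; linarith [hc_pow]
  · rw [hexpn]
    calc exp (-(t ^ 2 / 6)) ^ n - (sin t / t) ^ n
        ≤ exp (-(t ^ 2 / 6)) ^ n - exp (-(t ^ 2 / 6)) ^ n * exp (-((n : ℝ) * t ^ 4 / 138)) := by
          rw [← hbn]; linarith [hb_pow]
      _ = exp (-(t ^ 2 / 6)) ^ n * (1 - exp (-((n : ℝ) * t ^ 4 / 138))) := by ring
      _ ≤ exp (-(t ^ 2 / 6)) ^ n * ((n : ℝ) * t ^ 4 / 138) :=
          mul_le_mul_of_nonneg_left h1e hanpos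
end
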